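/- arXiv:2605.02251 — 2 statements merged into one kernel-verified Lean document; each statement's English description precedes it below -/
import Mathlib

section
/- Let q, t ∈ ℂ with 0 < |q| < 1, t ≠ 0 and t ≠ q^m for every m ∈ ℤ. For d ∈ ℤ and n ∈ ℕ define S_{d,n} := Σ_{j=0}^{2n} (t;q)_j (t;q)_{2n−j} (t^{−1};q)_{j+d} t^{j+d} / ((q;q)_j (q;q)_{2n−j} (t;q)_{j+d}), where (t^{−1};q)_{j+d} and (t;q)_{j+d} are ℤ-indexed q-Pochhammer symbols. Then for all l, n ∈ ℕ and every integer j with 0 ≤ j ≤ 2l, one has [2l choose j]_q · S_{j−l−n, n} = − [2l choose 2l−j]_q · S_{l−j−n+1, n}; consequently Σ_{j=0}^{2l} [2l choose j]_q S_{j−l−n,n} = − Σ_{j=0}^{2l} [2l choose j]_q S_{j−l−n+1,n}. -/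
open Finset

/-- Finite q-Pochhammer symbol `(a;q)_n`. -/
noncomputable def qPoch (a q : ℂ) (n : ℕ) : ℂ := ∏ i ∈ Finset.range n, (1 - a * q ^ i)

/-- Infinite q-Pochhammer symbol `(a;q)_∞`. -/
noncomputable def qPochInf (a q : ℂ) : ℂ := ∏' i : ℕ, (1 - a * q ^ i)

/-- ℤ-indexed q-Pochhammer symbol `(a;q)_m := (a;q)_∞ / (a q^m;q)_∞`. -/
noncomputable def qPochZ (a q : ℂ) (m : ℤ) : ℂ := qPochInf a q / qPochInf (a * q ^ m) q

/-- q-binomial coefficient. -/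
noncomputable def qBinom (q : ℂ) (M N : ℕ) : ℂ :=
  if N ≤ M then qPoch q q M / (qPoch q q N * qPoch q q (M - N)) else 0

/-- The auxiliary sum `S_{d,n}` of Section 3, with ℤ-indexed q-Pochhammer
symbols `(t⁻¹;q)_{j+d}` and `(t;q)_{j+d}`. -/
noncomputable def Ssum (q t : ℂ) (d : ℤ) (n : ℕ) : ℂ :=
  ∑ j ∈ Finset.range (2 * n + 1),
    qPoch t q j * qPoch t q (2 * n - j) * qPochZ t⁻¹ q ((j : ℤ) + d) * t ^ ((j : ℤ) + d) /
      (qPoch q q j * qPoch q q (2 * n - j) * qPochZ t q ((j : ℤ) + d))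

/- ### Auxiliary analytic lemmas -/

lemma log_summable {q : ℂ} (hq1 : ‖q‖ < 1) (b : ℂ) :
    Summable (fun n : ℕ => Complex.log (1 - b * q ^ n)) := by
  apply Summable.of_norm_bounded_eventually (g := fun n : ℕ => 3 / 2 * (‖b‖ * ‖q‖ ^ n))
  · exact (summable_geometric_of_lt_one (norm_nonneg q) hq1).mul_left _ |>.mul_left _
  · have h0 : Filter.Tendsto (fun n : ℕ => ‖b‖ * ‖q‖ ^ n)
        Filter.atTop (nhds 0) := by
      simpa using (tendsto_pow_atTop_nhds_zero_of_lt_one (norm_nonneg q) hq1).const_mul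
        (‖b‖)
    have hev : ∀ᶠ n : ℕ in Filter.atTop, ‖b‖ * ‖q‖ ^ n ≤ 1 / 2 := by
      exact h0.eventually (by
        have : Set.Iic ((1:ℝ)/2) ∈ nhds (0:ℝ) := Iic_mem_nhds (by norm_num)
        exact this)
    rw [Nat.cofinite_eq_atTop]
    filter_upwards [hev] with n hn
    have : (1 : ℂ) - b * q ^ n = 1 + (-(b * q ^ n)) := by ring
    rw [this]
    have hb : ‖-(b * q ^ n)‖ ≤ 1 / 2 := by
      simpa [norm_mul, norm_pow] using hn
    calc ‖Complex.log (1 + -(b * q ^ n))‖ ≤ 3 / 2 * ‖-(b * q ^ n)‖ :=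
          Complex.norm_log_one_add_half_le_self hb
      _ ≤ 3 / 2 * (‖b‖ * ‖q‖ ^ n) := by
          simp [norm_mul, norm_pow]

lemma qPochInf_hasProd {q : ℂ} (hq1 : ‖q‖ < 1) {b : ℂ}
    (hb : ∀ i : ℕ, b * q ^ i ≠ 1) :
    HasProd (fun i : ℕ => 1 - b * q ^ i)
      (Complex.exp (∑' n : ℕ, Complex.log (1 - b * q ^ n))) := by
  have hs := (log_summable hq1 b).hasSum
  have := hs.cexp
  refine this.congr_fun fun i => ?_
  simp only [Function.comp]
  symm
  apply Complex.exp_log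
  intro h
  exact hb i (by linear_combination -h)

lemma qPochInf_ne_zero {q : ℂ} (hq1 : ‖q‖ < 1) {b : ℂ}
    (hb : ∀ i : ℕ, b * q ^ i ≠ 1) : qPochInf b q ≠ 0 := by
  rw [qPochInf, (qPochInf_hasProd hq1 hb).tprod_eq]
  exact Complex.exp_ne_zero _

lemma qPochInf_multipliable {q : ℂ} (hq1 : ‖q‖ < 1) {b : ℂ}
    (hb : ∀ i : ℕ, b * q ^ i ≠ 1) : Multipliable (fun i : ℕ => 1 - b * q ^ i) :=
  ⟨_, qPochInf_hasProd hq1 hb⟩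

set_option maxHeartbeats 1000000 in
lemma qPochInf_rec {q : ℂ} (hq1 : ‖q‖ < 1) {b : ℂ}
    (hb : ∀ i : ℕ, b * q ^ i ≠ 1) :
    qPochInf b q = (1 - b) * qPochInf (b * q) q := by
  have hmul : Multipliable (fun i : ℕ => 1 - b * q ^ (i + 1)) := by
    have hb' : ∀ i : ℕ, (b * q) * q ^ i ≠ 1 := fun i => by
      have h := hb (i + 1)
      rw [pow_succ'] at h
      intro hc; exact h (by linear_combination hc)
    have hm := qPochInf_multipliable hq1 hb'
    refine hm.congr fun i => ?_
    rw [pow_succ']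
    ring
  rw [qPochInf, tprod_eq_zero_mul' hmul]
  simp only [pow_zero, mul_one, qPochInf]
  congr 1
  apply tprod_congr
  intro i
  ring

lemma qPochZ_ne_zero {q : ℂ} (hq0 : q ≠ 0) (hq1 : ‖q‖ < 1) {a : ℂ}
    (ha : ∀ j : ℤ, a * q ^ j ≠ 1) (m : ℤ) : qPochZ a q m ≠ 0 := by
  have h1 : ∀ i : ℕ, a * q ^ i ≠ 1 := fun i => by
    have := ha (i : ℤ); rwa [zpow_natCast] at this
  have h2 : ∀ i : ℕ, (a * q ^ m) * q ^ i ≠ 1 := fun i => by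
    have := ha (m + i)
    rwa [zpow_add₀ hq0, zpow_natCast, ← mul_assoc] at this
  exact div_ne_zero (qPochInf_ne_zero hq1 h1) (qPochInf_ne_zero hq1 h2)

lemma qPochZ_succ {q : ℂ} (hq0 : q ≠ 0) (hq1 : ‖q‖ < 1) {a : ℂ}
    (ha : ∀ j : ℤ, a * q ^ j ≠ 1) (m : ℤ) :
    qPochZ a q (m + 1) = qPochZ a q m * (1 - a * q ^ m) := by
  have h2 : ∀ i : ℕ, (a * q ^ m) * q ^ i ≠ 1 := fun i => by
    have := ha (m + i)
    rwa [zpow_add₀ hq0, zpow_natCast, ← mul_assoc] at this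
  have hrec := qPochInf_rec hq1 h2
  have hm1 : a * q ^ m * q = a * q ^ (m + 1) := by
    rw [zpow_add_one₀ hq0, mul_assoc]
  rw [hm1] at hrec
  have h1 : ∀ i : ℕ, a * q ^ i ≠ 1 := fun i => by
    have := ha (i : ℤ); rwa [zpow_natCast] at this
  have hPa := qPochInf_ne_zero hq1 h1
  have hP1 : ∀ i : ℕ, (a * q ^ (m+1)) * q ^ i ≠ 1 := fun i => by
    have := ha (m + 1 + i)
    rwa [zpow_add₀ hq0 (m+1), zpow_natCast, ← mul_assoc] at this
  have hPne := qPochInf_ne_zero hq1 hP1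
  have hfac : (1 : ℂ) - a * q ^ m ≠ 0 := by
    have := h2 0; intro hc
    apply this; rw [pow_zero, mul_one]; linear_combination -hc
  rw [qPochZ, qPochZ, hrec]
  field_simp

section Anti

variable {q t : ℂ} (hq0 : q ≠ 0) (hq1 : ‖q‖ < 1)
  (ht0 : t ≠ 0) (htq : ∀ m : ℤ, t ≠ q ^ m)

include hq0 hq1 ht0 htq

lemma hat : ∀ j : ℤ, t * q ^ j ≠ 1 := fun j hc =>
  htq (-j) (by rw [zpow_neg]; exact eq_inv_of_mul_eq_one_left hc)

lemma hati : ∀ j : ℤ, t⁻¹ * q ^ j ≠ 1 := fun j hc =>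
  htq j ((inv_mul_eq_one₀ ht0).1 hc)

lemma g_step (k : ℤ) :
    qPochZ t⁻¹ q (k + 1) * t ^ (k + 1) / qPochZ t q (k + 1)
      = (qPochZ t⁻¹ q k * t ^ k / qPochZ t q k) * ((t - q ^ k) / (1 - t * q ^ k)) := by
  rw [qPochZ_succ hq0 hq1 (hati hq0 hq1 ht0 htq), qPochZ_succ hq0 hq1 (hat hq0 hq1 ht0 htq),
    zpow_add_one₀ ht0]
  have hB := qPochZ_ne_zero hq0 hq1 (hat hq0 hq1 ht0 htq) k
  have hfac : (1 : ℂ) - t * q ^ k ≠ 0 := fun hc => hat hq0 hq1 ht0 htq k (by linear_combination -hc)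
  field_simp

lemma g_iff (k : ℤ) :
    (qPochZ t⁻¹ q k * t ^ k / qPochZ t q k
        = -(qPochZ t⁻¹ q (1 - k) * t ^ (1 - k) / qPochZ t q (1 - k)))
      ↔ (qPochZ t⁻¹ q (k + 1) * t ^ (k + 1) / qPochZ t q (k + 1)
        = -(qPochZ t⁻¹ q (-k) * t ^ (-k) / qPochZ t q (-k))) := by
  have h1 := g_step hq0 hq1 ht0 htq k
  have h2 := g_step hq0 hq1 ht0 htq (-k)
  have e1 : (-k : ℤ) + 1 = 1 - k := by ring
  rw [e1] at h2
  have hr : ((t - q ^ k) / (1 - t * q ^ k)) * ((t - q ^ (-k)) / (1 - t * q ^ (-k))) = 1 := by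
    have hqk : q ^ k * q ^ (-k) = 1 := by rw [← zpow_add₀ hq0]; simp
    have hfac : (1 : ℂ) - t * q ^ k ≠ 0 :=
      fun hc => hat hq0 hq1 ht0 htq k (by linear_combination -hc)
    have hfac' : (1 : ℂ) - t * q ^ (-k) ≠ 0 :=
      fun hc => hat hq0 hq1 ht0 htq (-k) (by linear_combination -hc)
    rw [div_mul_div_comm, div_eq_one_iff_eq (mul_ne_zero hfac hfac')]
    linear_combination (1 - t ^ 2) * hqk
  have hrne : ((t - q ^ k) / (1 - t * q ^ k)) ≠ 0 := by
    intro hc; rw [hc, zero_mul] at hr; exact one_ne_zero hr.symm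
  constructor
  · intro h
    rw [h1, h, h2]
    linear_combination
      -(qPochZ t⁻¹ q (-k) * t ^ (-k) / qPochZ t q (-k)) * hr
  · intro h
    rw [h1] at h
    rw [h2]
    refine mul_right_cancel₀ hrne ?_
    linear_combination h + (qPochZ t⁻¹ q (-k) * t ^ (-k) / qPochZ t q (-k)) * hr

end Anti

section Anti2

variable {q t : ℂ} (hq0 : q ≠ 0) (hq1 : ‖q‖ < 1)
  (ht0 : t ≠ 0) (htq : ∀ m : ℤ, t ≠ q ^ m)

include hq0 hq1 ht0 htq

lemma g_anti (k : ℤ) :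
    qPochZ t⁻¹ q k * t ^ k / qPochZ t q k
      = -(qPochZ t⁻¹ q (1 - k) * t ^ (1 - k) / qPochZ t q (1 - k)) := by
  induction k using Int.induction_on with
  | zero =>
    -- g(0) = 1, g(1) = -1
    have h1 := g_step hq0 hq1 ht0 htq 0
    have hg0 : qPochZ t⁻¹ q 0 * t ^ (0 : ℤ) / qPochZ t q 0 = 1 := by
      have hA : qPochZ t⁻¹ q 0 = 1 := by
        rw [qPochZ, zpow_zero, mul_one]
        exact div_self (qPochInf_ne_zero hq1 (fun i => by
          have := hati hq0 hq1 ht0 htq (i : ℤ); rwa [zpow_natCast] at this))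
      have hB : qPochZ t q 0 = 1 := by
        rw [qPochZ, zpow_zero, mul_one]
        exact div_self (qPochInf_ne_zero hq1 (fun i => by
          have := hat hq0 hq1 ht0 htq (i : ℤ); rwa [zpow_natCast] at this))
      rw [hA, hB, zpow_zero]; norm_num
    have ht1 : (1 : ℂ) - t ≠ 0 := by
      have := htq 0; rw [zpow_zero] at this
      intro hc; exact this (by linear_combination -hc)
    rw [zero_add] at h1
    have : (1 : ℤ) - 0 = 1 := by ring
    rw [this, h1, hg0, one_mul, zpow_zero, mul_one]
    rw [← neg_div, neg_sub, div_self ht1]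
  | succ k ih =>
    have := (g_iff hq0 hq1 ht0 htq k).1 ih
    have e : (1 : ℤ) - (k + 1) = -k := by ring
    rwa [e]
  | pred k ih =>
    have e0 : (1 : ℤ) - -k = k + 1 := by ring
    rw [e0] at ih
    have h := (g_iff hq0 hq1 ht0 htq (-k - 1)).2
    rw [show ((-k : ℤ) - 1 + 1) = -k by ring, show (-(-k - 1) : ℤ) = k + 1 by ring] at h
    exact h ih

lemma Ssum_anti (d : ℤ) (n : ℕ) :
    Ssum q t d n = -Ssum q t (1 - 2 * n - d) n := by
  rw [Ssum, Ssum, ← Finset.sum_range_reflect, ← Finset.sum_neg_distrib]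
  refine Finset.sum_congr rfl fun j hj => ?_
  rw [Finset.mem_range] at hj
  have hj' : j ≤ 2 * n := by omega
  have e1 : 2 * n + 1 - 1 - j = 2 * n - j := by omega
  have e2 : 2 * n - (2 * n - j) = j := by omega
  rw [e1, e2]
  have e3 : (1 : ℤ) - (((2 * n - j : ℕ) : ℤ) + d) = (j : ℤ) + (1 - 2 * n - d) := by
    rw [Nat.cast_sub hj']; push_cast; ring
  have key := g_anti hq0 hq1 ht0 htq (((2 * n - j : ℕ) : ℤ) + d)
  rw [e3] at key
  have lhs_eq : ∀ (k : ℤ) (X Y U V : ℂ),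
      X * Y * qPochZ t⁻¹ q k * t ^ k / (U * V * qPochZ t q k)
        = (X * Y / (U * V)) * (qPochZ t⁻¹ q k * t ^ k / qPochZ t q k) := by
    intro k X Y U V
    rw [mul_assoc (X * Y), div_mul_div_comm]
  rw [lhs_eq, lhs_eq, key]
  ring

end Anti2

/-- Equation (3.10): the key pairing observation in the proof of the new
conjugate Bailey pair (Theorem 3.1), together with its consequence for the
full sums. -/
theorem S_pairing (q t : ℂ)
    (hq0 : 0 < ‖q‖) (hq1 : ‖q‖ < 1)
    (ht0 : t ≠ 0) (htq : ∀ m : ℤ, t ≠ q ^ m) (l n : ℕ) :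
    (∀ j : ℕ, j ≤ 2 * l →
      qBinom q (2 * l) j * Ssum q t ((j : ℤ) - l - n) n =
        -(qBinom q (2 * l) (2 * l - j) * Ssum q t ((l : ℤ) - j - n + 1) n)) ∧
    ∑ j ∈ Finset.range (2 * l + 1), qBinom q (2 * l) j * Ssum q t ((j : ℤ) - l - n) n =
      -∑ j ∈ Finset.range (2 * l + 1),
        qBinom q (2 * l) j * Ssum q t ((j : ℤ) - l - n + 1) n := by
  have hqne : q ≠ 0 := by
    intro h; rw [h] at hq0; simp at hq0
  have hpair : ∀ j : ℕ, j ≤ 2 * l →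
      qBinom q (2 * l) j * Ssum q t ((j : ℤ) - l - n) n =
        -(qBinom q (2 * l) (2 * l - j) * Ssum q t ((l : ℤ) - j - n + 1) n) := by
    intro j hj
    have hbin : qBinom q (2 * l) j = qBinom q (2 * l) (2 * l - j) := by
      rw [qBinom, qBinom, if_pos hj, if_pos (by omega : 2 * l - j ≤ 2 * l),
        show 2 * l - (2 * l - j) = j by omega]
      ring
    have hS := Ssum_anti hqne hq1 ht0 htq ((j : ℤ) - l - n) n
    rw [show (1 - 2 * (n : ℤ) - ((j : ℤ) - l - n)) = (l : ℤ) - j - n + 1 by ring] at hS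
    rw [hS, hbin]; ring
  refine ⟨hpair, ?_⟩
  have hrefl : ∑ j ∈ Finset.range (2 * l + 1), qBinom q (2 * l) j * Ssum q t ((j : ℤ) - l - n + 1) n
      = ∑ j ∈ Finset.range (2 * l + 1),
          qBinom q (2 * l) (2 * l - j) * Ssum q t ((l : ℤ) - j - n + 1) n := by
    rw [← Finset.sum_range_reflect]
    refine Finset.sum_congr rfl fun j hj => ?_
    rw [Finset.mem_range] at hj
    have hj' : j ≤ 2 * l := by omega
    rw [show 2 * l + 1 - 1 - j = 2 * l - j by omega]
    congr 2
    omega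
  rw [hrefl, ← Finset.sum_neg_distrib]
  refine Finset.sum_congr rfl fun j hj => ?_
  rw [Finset.mem_range] at hj
  exact hpair j (by omega)
end

section
/- Let q, z ∈ ℂ with 0 < |q| < 1 and z ≠ 0, and for m ∈ ℕ let H_m(z;q) := Σ_{j=0}^{m} [m choose j]_q z^{m−2j} denote the continuous q-Hermite polynomial. Then for every n ∈ ℕ, Σ_{s=0}^{n} (−1)^{n−s} q^{(n−s)(n−s−1)/2} / ((q;q)_s² (q;q)_{n−s}) · Σ_{u_1=0}^{s} Σ_{u_2=0}^{s} [s choose u_1]_q [s choose u_2]_q z^{2u_1−2u_2} = (1/(q;q)_n²) Σ_{j=0}^{2n} [2n choose j]_q z^{2j−2n}; equivalently, Σ_{s=0}^{n} (−1)^{n−s} q^{(n−s)(n−s−1)/2} H_s(z;q)² / ((q;q)_s² (q;q)_{n−s}) = H_{2n}(z;q) / (q;q)_n². -/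
open Finset

/-- The continuous q-Hermite polynomial `H_m(z;q) = Σ_{j=0}^m [m choose j]_q z^{m-2j}`. -/
noncomputable def qHermite (q z : ℂ) (m : ℕ) : ℂ :=
  ∑ j ∈ Finset.range (m + 1), qBinom q m j * z ^ ((m : ℤ) - 2 * (j : ℤ))

section basics
variable {q : ℂ}

lemma qfac_ne (hq1 : ‖q‖ < 1) (i : ℕ) : (1 : ℂ) - q * q ^ i ≠ 0 := by
  intro h
  have h2 : q * q ^ i = 1 := by linear_combination -h
  have : ‖q * q ^ i‖ < 1 := by
    rw [norm_mul, norm_pow]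
    calc ‖q‖ * ‖q‖ ^ i ≤ ‖q‖ * 1 := by
          apply mul_le_mul_of_nonneg_left _ (norm_nonneg q)
          exact pow_le_one₀ (norm_nonneg q) hq1.le
      _ < 1 := by simpa using hq1
  rw [h2] at this; simp at this

lemma qPoch_ne (hq1 : ‖q‖ < 1) (n : ℕ) : qPoch q q n ≠ 0 := by
  apply Finset.prod_ne_zero_iff.2
  intro i _
  exact qfac_ne hq1 i

lemma qPoch_zero : qPoch q q 0 = 1 := by simp [qPoch]

lemma qPoch_succ (n : ℕ) : qPoch q q (n + 1) = qPoch q q n * (1 - q ^ (n + 1)) := by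
  rw [qPoch, Finset.prod_range_succ, ← qPoch, pow_succ']

lemma one_sub_qpow_ne (hq1 : ‖q‖ < 1) (n : ℕ) : (1 : ℂ) - q ^ (n + 1) ≠ 0 := by
  have := qfac_ne (q := q) hq1 n
  rwa [← pow_succ'] at this

lemma qBinom_zero (hq1 : ‖q‖ < 1) (n : ℕ) : qBinom q n 0 = 1 := by
  simp [qBinom, qPoch_zero, div_self (qPoch_ne hq1 n)]

lemma qBinom_self (hq1 : ‖q‖ < 1) (n : ℕ) : qBinom q n n = 1 := by
  simp [qBinom, qPoch_zero, div_self (qPoch_ne hq1 n)]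

lemma qBinom_of_gt {n k : ℕ} (h : n < k) : qBinom q n k = 0 := by
  simp [qBinom, Nat.not_le.2 h]

end basics

section pascal
variable {q : ℂ}

lemma pascalA (hq1 : ‖q‖ < 1) (n k : ℕ) :
    qBinom q (n+1) (k+1) = qBinom q n (k+1) + q ^ (n-k) * qBinom q n k := by
  rcases lt_trichotomy k n with h|rfl|h
  · obtain ⟨d, rfl⟩ := Nat.exists_eq_add_of_lt h
    have e0 : k + 1 ≤ k + d + 1 + 1 := by omega
    have e1 : k + d + 1 + 1 - (k+1) = d + 1 := by omega
    have e2 : k + d + 1 - (k+1) = d := by omega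
    have e3 : k + d + 1 - k = d + 1 := by omega
    simp only [qBinom, if_pos e0, if_pos (by omega : k+1 ≤ k+d+1), if_pos (by omega : k ≤ k+d+1),
      e1, e2, e3]
    rw [qPoch_succ (k+d+1), qPoch_succ k, qPoch_succ d]
    have hq : q ^ (k + d + 1 + 1) = q ^ (d+1) * q ^ (k+1) := by
      rw [← pow_add]; congr 1; omega
    rw [hq]
    have h1 := qPoch_ne hq1 k
    have h2 := qPoch_ne hq1 d
    have h3 := qPoch_ne hq1 (k+d+1)
    have h4 := one_sub_qpow_ne hq1 k
    have h5 := one_sub_qpow_ne hq1 d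
    field_simp
    ring
  · rw [qBinom_self hq1, qBinom_of_gt (by omega), qBinom_self hq1]
    simp
  · rw [qBinom_of_gt (by omega), qBinom_of_gt (by omega), qBinom_of_gt (by omega)]
    simp

lemma absorb (hq1 : ‖q‖ < 1) (n k : ℕ) :
    (1 - q ^ (n+1)) * qBinom q n k = (1 - q ^ (n+1-k)) * qBinom q (n+1) k := by
  rcases le_or_gt k n with h|h
  · obtain ⟨d, rfl⟩ := Nat.exists_eq_add_of_le h
    have e1 : k + d - k = d := by omega
    have e2 : k + d + 1 - k = d + 1 := by omega
    simp only [qBinom, if_pos (by omega : k ≤ k+d), if_pos (by omega : k ≤ k+d+1), e1, e2]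
    rw [qPoch_succ (k+d), qPoch_succ d]
    have h1 := qPoch_ne hq1 k
    have h2 := qPoch_ne hq1 d
    have h3 := qPoch_ne hq1 (k+d)
    have h5 := one_sub_qpow_ne hq1 d
    field_simp
  · rcases eq_or_lt_of_le (by omega : n + 1 ≤ k) with rfl|h2
    · rw [qBinom_of_gt (by omega), qBinom_self hq1]
      simp
    · rw [qBinom_of_gt (by omega), qBinom_of_gt (by omega)]
      simp

lemma C_mul_P (hq1 : ‖q‖ < 1) {m k : ℕ} (h : k + 1 ≤ m) :
    qBinom q m (k+1) * qPoch q q (k+1) = qBinom q m k * qPoch q q k * (1 - q ^ (m-k)) := by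
  obtain ⟨d, rfl⟩ := Nat.exists_eq_add_of_le h
  have e1 : k + 1 + d - (k+1) = d := by omega
  have e2 : k + 1 + d - k = d + 1 := by omega
  simp only [qBinom, if_pos (by omega : k+1 ≤ k+1+d), if_pos (by omega : k ≤ k+1+d), e1, e2]
  rw [qPoch_succ d]
  have h1 := qPoch_ne hq1 k
  have h2 := qPoch_ne hq1 d
  have h3 := qPoch_ne hq1 (k+1)
  have h5 := one_sub_qpow_ne hq1 d
  field_simp

lemma qPoch_one : qPoch q q 1 = 1 - q := by simp [qPoch]

lemma C_one (hq1 : ‖q‖ < 1) {m : ℕ} (h : 1 ≤ m) :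
    qBinom q m 1 * (1 - q) = 1 - q ^ m := by
  have := C_mul_P hq1 (k := 0) (m := m) (by omega)
  rw [qPoch_one, qPoch_zero, qBinom_zero hq1] at this
  simpa using this

lemma C_symm (hq1 : ‖q‖ < 1) {n k : ℕ} (h : k ≤ n) :
    qBinom q n (n - k) = qBinom q n k := by
  simp only [qBinom, if_pos h, if_pos (by omega : n - k ≤ n)]
  rw [(by omega : n - (n-k) = k), mul_comm]

end pascal

section hermite
variable {q z : ℂ}

lemma H_zero (hq1 : ‖q‖ < 1) : qHermite q z 0 = 1 := by
  simp [qHermite, qBinom_zero hq1]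

lemma H_one (hq1 : ‖q‖ < 1) : qHermite q z 1 = z + z⁻¹ := by
  rw [qHermite]
  rw [Finset.sum_range_succ, Finset.sum_range_one, qBinom_zero hq1, qBinom_self hq1]
  norm_num

lemma H_rec (hq1 : ‖q‖ < 1) (hz : z ≠ 0) (n : ℕ) :
    qHermite q z (n+1) = (z + z⁻¹) * qHermite q z n - (1 - q ^ n) * qHermite q z (n-1) := by
  have hA : z * qHermite q z n
      = z ^ ((n:ℤ)+1) + ∑ i ∈ range (n+1), qBinom q n (i+1) * z ^ ((n:ℤ) - 2*(i:ℤ) - 1) := by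
    rw [qHermite, Finset.mul_sum, Finset.sum_range_succ']
    rw [Finset.sum_range_succ (fun i => qBinom q n (i+1) * z ^ ((n:ℤ) - 2*(i:ℤ) - 1)) n]
    rw [qBinom_of_gt (by omega : n < n+1), qBinom_zero hq1]
    have h0 : z * (1 * z ^ ((n:ℤ) - 2*((0:ℕ):ℤ))) = z ^ ((n:ℤ)+1) := by
      rw [show ((n:ℤ) - 2*((0:ℕ):ℤ)) = (n:ℤ) from by push_cast; ring,
        show (n:ℤ)+1 = (n:ℤ)+1 from rfl, zpow_add_one₀ hz]
      ring
    rw [h0]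
    rw [add_comm (z ^ ((n:ℤ)+1))]
    simp only [zero_mul, add_zero]
    congr 1
    apply Finset.sum_congr rfl
    intro i _
    rw [show ((n:ℤ) - 2*(((i+1:ℕ)):ℤ)) = ((n:ℤ) - 2*(i:ℤ) - 1) + (-1) from by push_cast; ring,
      zpow_add₀ hz, zpow_neg_one]
    field_simp
  have hB : z⁻¹ * qHermite q z n
      = ∑ i ∈ range (n+1), qBinom q n i * z ^ ((n:ℤ) - 2*(i:ℤ) - 1) := by
    rw [qHermite, Finset.mul_sum]
    apply Finset.sum_congr rfl
    intro i _
    rw [show ((n:ℤ) - 2*(i:ℤ) - 1) = ((n:ℤ) - 2*(i:ℤ)) + (-1) from by ring,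
      zpow_add₀ hz, zpow_neg_one]
    ring
  have hH : qHermite q z (n+1)
      = z ^ ((n:ℤ)+1) + ∑ i ∈ range (n+1), qBinom q (n+1) (i+1) * z ^ ((n:ℤ) - 2*(i:ℤ) - 1) := by
    rw [qHermite, Finset.sum_range_succ', qBinom_zero hq1, add_comm]
    congr 1
    · rw [show (((n+1:ℕ)):ℤ) - 2*((0:ℕ):ℤ) = (n:ℤ)+1 from by push_cast; ring]
      ring
    · apply Finset.sum_congr rfl
      intro i _
      rw [show (((n+1:ℕ)):ℤ) - 2*(((i+1:ℕ)):ℤ) = (n:ℤ) - 2*(i:ℤ) - 1 from by push_cast; ring]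
  have key : (z + z⁻¹) * qHermite q z n - qHermite q z (n+1)
      = ∑ i ∈ range (n+1), (1 - q^(n-i)) * qBinom q n i * z ^ ((n:ℤ) - 2*(i:ℤ) - 1) := by
    rw [add_mul, hA, hB, hH]
    rw [show ∀ a s1 s2 s3 : ℂ, a + s1 + s2 - (a + s3) = s1 + s2 - s3 from by intros; ring]
    rw [← Finset.sum_add_distrib, ← Finset.sum_sub_distrib]
    apply Finset.sum_congr rfl
    intro i _
    rw [pascalA hq1 n i]
    ring
  cases n with
  | zero =>
    simp only [Finset.sum_range_one, Nat.sub_self, pow_zero, sub_self, zero_mul, mul_zero,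
      zero_add] at key ⊢
    linear_combination -key
  | succ m =>
    have hs : ∑ i ∈ range (m+1+1), (1 - q^(m+1-i)) * qBinom q (m+1) i *
        z ^ (((m+1:ℕ):ℤ) - 2*(i:ℤ) - 1) = (1 - q^(m+1)) * qHermite q z m := by
      rw [Finset.sum_range_succ, Nat.sub_self, pow_zero, sub_self, zero_mul, zero_mul, add_zero]
      rw [qHermite, Finset.mul_sum]
      apply Finset.sum_congr rfl
      intro i _
      rw [← mul_assoc, ← absorb hq1 m i]
      rw [show ((m:ℤ) - 2*(i:ℤ)) = ((m+1:ℕ):ℤ) - 2*(i:ℤ) - 1 from by push_cast; ring]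
    rw [hs] at key
    rw [show m + 1 - 1 = m from rfl]
    linear_combination -key

end hermite

section linsec
variable {q z : ℂ}

lemma keyId (hq1 : ‖q‖ < 1) (n m k : ℕ) (hm : n + 2 ≤ m) :
    qBinom q m (k+1) * qBinom q (n+2) (k+1) * qPoch q q (k+1) =
    qBinom q m (k+1) * qBinom q (n+1) (k+1) * qPoch q q (k+1)
    + qBinom q m k * qBinom q (n+1) k * qPoch q q k * (1 - q^(m+n+1-2*k))
    - (1 - q^(n+1)) * (qBinom q m k * qBinom q n k * qPoch q q k) := by
  rcases le_or_gt k n with h|h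
  · have hCP := C_mul_P hq1 (show k + 1 ≤ m by omega)
    have habs := absorb hq1 n k
    have hpA := pascalA hq1 (n+1) k
    rw [show (n+1) - k = n+1-k from rfl] at hpA
    rw [show m+n+1-2*k = (n+1-k)+(m-k) from by omega, pow_add, hpA,
      show n+1-k = n+1-k from rfl]
    linear_combination (q^(n+1-k) * qBinom q (n+1) k) * hCP
      + (qBinom q m k * qPoch q q k) * habs
  · rcases eq_or_lt_of_le (show n + 1 ≤ k by omega) with rfl|h2
    · have hCP := C_mul_P hq1 (show (n+1) + 1 ≤ m by omega)
      rw [qBinom_self hq1, qBinom_of_gt (show n+1 < n+2 by omega),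
        qBinom_of_gt (show n < n+1 by omega), qBinom_self hq1,
        show m+n+1-2*(n+1) = m-(n+1) from by omega]
      rw [show (n+1)+1 = n+2 from rfl] at hCP
      linear_combination hCP
    · rw [qBinom_of_gt (show n+2 < k+1 by omega), qBinom_of_gt (show n+1 < k+1 by omega),
        qBinom_of_gt (show n+1 < k by omega), qBinom_of_gt (show n < k by omega)]
      ring

lemma lin (hq1 : ‖q‖ < 1) (hz : z ≠ 0) :
    ∀ n m : ℕ, n ≤ m → qHermite q z m * qHermite q z n
      = ∑ k ∈ range (n+1), qBinom q m k * qBinom q n k * qPoch q q k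
          * qHermite q z (m + n - 2*k) := by
  intro n
  induction n using Nat.strong_induction_on with
  | _ n ih =>
  match n with
  | 0 =>
    intro m hm
    simp [H_zero hq1, qBinom_zero hq1, qBinom_self hq1, qPoch_zero]
  | 1 =>
    intro m hm
    rw [H_one hq1, Finset.sum_range_succ, Finset.sum_range_one,
      qBinom_zero hq1, qBinom_zero hq1, qBinom_self hq1, qPoch_zero, qPoch_one]
    have h1 : m + 1 - 2*1 = m - 1 := by omega
    have h0 : m + 1 - 2*0 = m + 1 := by omega
    rw [h1, h0]
    have hr := H_rec hq1 hz m
    have hc := C_one hq1 hm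
    linear_combination -hr - qHermite q z (m-1) * hc
  | (n+2) =>
    intro m hm
    have hr2 : qHermite q z (n+2) = (z + z⁻¹) * qHermite q z (n+1)
        - (1 - q^(n+1)) * qHermite q z n := H_rec hq1 hz (n+1)
    have ih1 := ih (n+1) (by omega) m (by omega)
    have ih0 := ih n (by omega) m (by omega)
    rw [hr2, mul_sub, mul_comm (qHermite q z m) ((z+z⁻¹) * qHermite q z (n+1)),
      mul_assoc, mul_comm (qHermite q z (n+1)) (qHermite q z m), ih1,
      mul_comm (qHermite q z m) ((1 - q^(n+1)) * qHermite q z n), mul_assoc,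
      mul_comm (qHermite q z n) (qHermite q z m), ih0]
    -- expand (z+z⁻¹) * Σ  using H_rec termwise
    rw [Finset.mul_sum]
    have hterm : ∀ k ∈ range (n+2), (z+z⁻¹) * (qBinom q m k * qBinom q (n+1) k * qPoch q q k
        * qHermite q z (m + (n+1) - 2*k))
        = qBinom q m k * qBinom q (n+1) k * qPoch q q k *
            (qHermite q z (m+n+2-2*k) + (1 - q^(m+n+1-2*k)) * qHermite q z (m+n-2*k)) := by
      intro k hk
      have hk' : k ≤ n+1 := by simpa [Nat.lt_succ_iff] using Finset.mem_range.mp hk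
      have h2k : 2*k ≤ m + n := by omega
      have e1 : m + (n+1) - 2*k = (m+n-2*k) + 1 := by omega
      have e2 : m + n + 2 - 2*k = (m+n-2*k) + 1 + 1 := by omega
      have e3 : m + n + 1 - 2*k = (m+n-2*k) + 1 := by omega
      have hr := H_rec hq1 hz ((m+n-2*k) + 1)
      rw [e1, e2, e3]
      rw [show (m+n-2*k) + 1 - 1 = m+n-2*k from rfl] at hr
      linear_combination -(qBinom q m k * qBinom q (n+1) k * qPoch q q k) * hr
    rw [Finset.sum_congr rfl hterm]
    have hS1 : ∑ k ∈ range (n+2), qBinom q m k * qBinom q (n+1) k * qPoch q q k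
          * qHermite q z (m+n+2-2*k)
        = qHermite q z (m+n+2) + ∑ i ∈ range (n+2),
            qBinom q m (i+1) * qBinom q (n+1) (i+1) * qPoch q q (i+1)
              * qHermite q z (m+n-2*i) := by
      conv_lhs => rw [Finset.sum_range_succ']
      conv_rhs => rw [Finset.sum_range_succ]
      rw [qBinom_of_gt (show n+1 < n+1+1 by omega), qBinom_zero hq1, qBinom_zero hq1, qPoch_zero,
        show m+n+2-2*0 = m+n+2 from by omega]
      rw [Finset.sum_congr rfl (fun i (_ : i ∈ range (n+1)) => by
        rw [show m+n+2-2*(i+1) = m+n-2*i from by omega] :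
        ∀ i ∈ range (n+1), qBinom q m (i+1) * qBinom q (n+1) (i+1) * qPoch q q (i+1)
          * qHermite q z (m+n+2-2*(i+1))
          = qBinom q m (i+1) * qBinom q (n+1) (i+1) * qPoch q q (i+1)
            * qHermite q z (m+n-2*i))]
      ring
    have hS3 : ∑ k ∈ range (n+1), qBinom q m k * qBinom q n k * qPoch q q k
          * qHermite q z (m+n-2*k)
        = ∑ k ∈ range (n+2), qBinom q m k * qBinom q n k * qPoch q q k
          * qHermite q z (m+n-2*k) := by
      conv_rhs => rw [Finset.sum_range_succ]
      rw [qBinom_of_gt (show n < n+1 by omega)]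
      ring
    have hRHS : ∑ k ∈ range (n+2+1), qBinom q m k * qBinom q (n+2) k * qPoch q q k
          * qHermite q z (m+(n+2)-2*k)
        = qHermite q z (m+n+2) + ∑ i ∈ range (n+2),
            qBinom q m (i+1) * qBinom q (n+2) (i+1) * qPoch q q (i+1)
              * qHermite q z (m+n-2*i) := by
      rw [Finset.sum_range_succ']
      rw [qBinom_zero hq1, qBinom_zero hq1, qPoch_zero,
        show m+(n+2)-2*0 = m+n+2 from by omega]
      rw [Finset.sum_congr rfl (fun i (_ : i ∈ range (n+2)) => by
        rw [show m+(n+2)-2*(i+1) = m+n-2*i from by omega] :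
        ∀ i ∈ range (n+2), qBinom q m (i+1) * qBinom q (n+2) (i+1) * qPoch q q (i+1)
          * qHermite q z (m+(n+2)-2*(i+1))
          = qBinom q m (i+1) * qBinom q (n+2) (i+1) * qPoch q q (i+1)
            * qHermite q z (m+n-2*i))]
      ring
    rw [Finset.sum_congr rfl (fun k (_ : k ∈ range (n+2)) => mul_add
      (qBinom q m k * qBinom q (n+1) k * qPoch q q k) (qHermite q z (m+n+2-2*k))
      ((1 - q^(m+n+1-2*k)) * qHermite q z (m+n-2*k)))]
    rw [Finset.sum_add_distrib, hS1, hS3, hRHS, Finset.mul_sum]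
    have hcomb : ∑ i ∈ range (n+2),
          qBinom q m (i+1) * qBinom q (n+1) (i+1) * qPoch q q (i+1) * qHermite q z (m+n-2*i)
        + ∑ i ∈ range (n+2), qBinom q m i * qBinom q (n+1) i * qPoch q q i
            * ((1 - q^(m+n+1-2*i)) * qHermite q z (m+n-2*i))
        - ∑ i ∈ range (n+2), (1 - q^(n+1))
            * (qBinom q m i * qBinom q n i * qPoch q q i * qHermite q z (m+n-2*i))
        = ∑ i ∈ range (n+2),
          qBinom q m (i+1) * qBinom q (n+2) (i+1) * qPoch q q (i+1)
            * qHermite q z (m+n-2*i) := by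
      rw [← Finset.sum_add_distrib, ← Finset.sum_sub_distrib]
      apply Finset.sum_congr rfl
      intro i _
      linear_combination -(qHermite q z (m+n-2*i)) * keyId hq1 n m i hm
    linear_combination hcomb

end linsec

section altsec
variable {q : ℂ}

lemma pascalB (hq1 : ‖q‖ < 1) (n k : ℕ) :
    qBinom q (n+1) (k+1) = q ^ (k+1) * qBinom q n (k+1) + qBinom q n k := by
  rcases lt_trichotomy k n with h|rfl|h
  · obtain ⟨d, rfl⟩ := Nat.exists_eq_add_of_lt h
    have e0 : k + 1 ≤ k + d + 1 + 1 := by omega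
    have e1 : k + d + 1 + 1 - (k+1) = d + 1 := by omega
    have e2 : k + d + 1 - (k+1) = d := by omega
    have e3 : k + d + 1 - k = d + 1 := by omega
    simp only [qBinom, if_pos e0, if_pos (by omega : k+1 ≤ k+d+1), if_pos (by omega : k ≤ k+d+1),
      e1, e2, e3]
    rw [qPoch_succ (k+d+1), qPoch_succ k, qPoch_succ d]
    have hq : q ^ (k + d + 1 + 1) = q ^ (d+1) * q ^ (k+1) := by
      rw [← pow_add]; congr 1; omega
    rw [hq]
    have h1 := qPoch_ne hq1 k
    have h2 := qPoch_ne hq1 d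
    have h3 := qPoch_ne hq1 (k+d+1)
    have h4 := one_sub_qpow_ne hq1 k
    have h5 := one_sub_qpow_ne hq1 d
    field_simp
    ring
  · rw [qBinom_self hq1, qBinom_of_gt (by omega), qBinom_self hq1]
    simp
  · rw [qBinom_of_gt (by omega), qBinom_of_gt (by omega), qBinom_of_gt (by omega)]
    simp

lemma tri_succ (k : ℕ) : (k+2)*(k+1)/2 = (k+1)*k/2 + (k+1) := by
  rw [show (k+2)*(k+1) = (k+1)*k + 2*(k+1) from by ring,
    Nat.add_mul_div_left _ _ (by norm_num : (0:ℕ) < 2)]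

lemma altsum (hq1 : ‖q‖ < 1) (N : ℕ) :
    ∑ t ∈ range (N+1), (-1:ℂ)^t * q^(t*(t-1)/2) * qBinom q N t
      = if N = 0 then 1 else 0 := by
  cases N with
  | zero => simp [qBinom_zero hq1]
  | succ N =>
    rw [if_neg (by omega)]
    rw [Finset.sum_range_succ']
    have hsplit : ∀ k ∈ range (N+1),
        (-1:ℂ)^(k+1) * q^((k+1)*(k+1-1)/2) * qBinom q (N+1) (k+1)
        = (-1:ℂ)^(k+1) * q^((k+2)*(k+1)/2) * qBinom q N (k+1)
          + (-1:ℂ)^(k+1) * q^((k+1)*k/2) * qBinom q N k := by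
      intro k _
      rw [pascalB hq1 N k, Nat.add_sub_cancel, tri_succ k, pow_add]
      ring
    rw [Finset.sum_congr rfl hsplit, Finset.sum_add_distrib]
    have hU : ∑ k ∈ range (N+1), (-1:ℂ)^(k+1) * q^((k+1)*k/2) * qBinom q N k
        = -(∑ k ∈ range (N+1), (-1:ℂ)^k * q^((k+1)*k/2) * qBinom q N k) := by
      rw [← Finset.sum_neg_distrib]
      apply Finset.sum_congr rfl
      intro k _
      rw [pow_succ]
      ring
    have hV : ∑ k ∈ range (N+1), (-1:ℂ)^(k+1) * q^((k+2)*(k+1)/2) * qBinom q N (k+1)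
        = (∑ k ∈ range (N+1), (-1:ℂ)^k * q^((k+1)*k/2) * qBinom q N k) - 1 := by
      conv_rhs => rw [Finset.sum_range_succ'
        (fun k => (-1:ℂ)^k * q^((k+1)*k/2) * qBinom q N k) N]
      rw [Finset.sum_range_succ, qBinom_of_gt (show N < N+1 by omega), qBinom_zero hq1]
      rw [Finset.sum_congr rfl (fun i (_ : i ∈ range N) => by
        rw [show (i+1+1)*(i+1)/2 = (i+2)*(i+1)/2 from rfl] :
        ∀ i ∈ range N, (-1:ℂ)^(i+1) * q^((i+1+1)*(i+1)/2) * qBinom q N (i+1)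
          = (-1:ℂ)^(i+1) * q^((i+2)*(i+1)/2) * qBinom q N (i+1))]
      norm_num
    rw [hU, hV, qBinom_zero hq1]
    norm_num
    ring

end altsec

lemma tri_swap (f : ℕ → ℕ → ℂ) (n : ℕ) :
    ∑ s ∈ range (n+1), ∑ j ∈ range (s+1), f s j
    = ∑ j ∈ range (n+1), ∑ t ∈ range (n+1-j), f (j+t) j := by
  have h1 : ∀ s ∈ range (n+1), ∑ j ∈ range (s+1), f s j
      = ∑ j ∈ range (n+1), if j ≤ s then f s j else 0 := by
    intro s hs
    have hs' : s < n + 1 := Finset.mem_range.mp hs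
    calc ∑ j ∈ range (s+1), f s j
        = ∑ j ∈ range (s+1), (if j ≤ s then f s j else 0) := by
          apply Finset.sum_congr rfl
          intro j hj
          rw [if_pos (by have := Finset.mem_range.mp hj; omega)]
      _ = ∑ j ∈ range (n+1), (if j ≤ s then f s j else 0) := by
          apply Finset.sum_subset (Finset.range_subset_range.2 (by omega))
          intro j hj1 hj2
          have : ¬ j < s + 1 := fun h => hj2 (Finset.mem_range.mpr h)
          rw [if_neg (by omega)]
  rw [Finset.sum_congr rfl h1, Finset.sum_comm]
  apply Finset.sum_congr rfl
  intro j hj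
  have h3 : (range (n+1)).filter (fun s => j ≤ s) = Finset.Ico j (n+1) := by
    ext x
    simp only [Finset.mem_filter, Finset.mem_range, Finset.mem_Ico]
    omega
  rw [← Finset.sum_filter, h3, Finset.sum_Ico_eq_sum_range]

section assemble
variable {q z : ℂ}

lemma hlin2 (hq1 : ‖q‖ < 1) (hz : z ≠ 0) (s : ℕ) :
    qHermite q z s ^ 2 = ∑ j ∈ range (s+1),
      qBinom q s j^2 * qPoch q q (s-j) * qHermite q z (2*j) := by
  rw [pow_two, lin hq1 hz s s le_rfl]
  rw [← Finset.sum_range_reflect (fun j => qBinom q s j^2 * qPoch q q (s-j)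
    * qHermite q z (2*j)) (s+1)]
  apply Finset.sum_congr rfl
  intro j hj
  have hj' : j ≤ s := by have := Finset.mem_range.mp hj; omega
  simp only [Nat.add_sub_cancel]
  rw [C_symm hq1 hj', show s - (s - j) = j from by omega,
    show s + s - 2*j = 2*(s-j) from by omega]
  ring

lemma hinner (hq1 : ‖q‖ < 1) {n j : ℕ} (hj : j ≤ n) :
    ∑ t ∈ range (n+1-j), ((-1:ℂ)^(n-j-t) * q^((n-j-t)*((n-j-t)-1)/2)
        / (qPoch q q t * qPoch q q (n-j-t)))
      = if j = n then 1 else 0 := by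
  have hd : n+1-j = (n-j)+1 := by omega
  rw [hd]
  rw [← Finset.sum_range_reflect (fun t => (-1:ℂ)^(n-j-t) * q^((n-j-t)*((n-j-t)-1)/2)
    / (qPoch q q t * qPoch q q (n-j-t))) ((n-j)+1)]
  have hterm : ∀ t ∈ range ((n-j)+1),
      (-1:ℂ)^(n-j-((n-j)+1-1-t)) * q^((n-j-((n-j)+1-1-t))*((n-j-((n-j)+1-1-t))-1)/2)
        / (qPoch q q ((n-j)+1-1-t) * qPoch q q (n-j-((n-j)+1-1-t)))
      = (-1:ℂ)^t * q^(t*(t-1)/2) * qBinom q (n-j) t / qPoch q q (n-j) := by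
    intro t ht
    have ht' : t ≤ n - j := by have := Finset.mem_range.mp ht; omega
    rw [show (n-j)+1-1-t = (n-j)-t from by omega, show n-j-((n-j)-t) = t from by omega]
    rw [qBinom, if_pos ht', show (n-j) - t = n-j-t from rfl]
    have h1 := qPoch_ne hq1 t
    have h2 := qPoch_ne hq1 (n-j-t)
    have h3 := qPoch_ne hq1 (n-j)
    field_simp
  rw [Finset.sum_congr rfl hterm, ← Finset.sum_div, altsum hq1 (n-j)]
  rcases eq_or_lt_of_le hj with rfl|h
  · simp [qPoch_zero]
  · rw [if_neg (by omega), if_neg (by omega), zero_div]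

lemma hsym (hq1 : ‖q‖ < 1) (z : ℂ) (s : ℕ) :
    qHermite q z s = ∑ u ∈ range (s+1), qBinom q s u * z ^ (2*(u:ℤ) - (s:ℤ)) := by
  rw [qHermite, ← Finset.sum_range_reflect (fun u => qBinom q s u * z ^ (2*(u:ℤ) - (s:ℤ))) (s+1)]
  apply Finset.sum_congr rfl
  intro u hu
  have hu' : u ≤ s := by have := Finset.mem_range.mp hu; omega
  rw [show s+1-1-u = s-u from by omega, C_symm hq1 hu']
  congr 1
  have : ((s - u : ℕ) : ℤ) = (s:ℤ) - (u:ℤ) := by omega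
  rw [this]
  ring_nf

lemma hHsq (hq1 : ‖q‖ < 1) (hz : z ≠ 0) (s : ℕ) :
    (∑ u₁ ∈ range (s+1), ∑ u₂ ∈ range (s+1),
      qBinom q s u₁ * qBinom q s u₂ * z ^ (2*(u₁:ℤ) - 2*(u₂:ℤ)))
    = qHermite q z s ^ 2 := by
  rw [pow_two]
  nth_rewrite 1 [hsym hq1 z s]
  rw [qHermite, Finset.sum_mul_sum]
  apply Finset.sum_congr rfl
  intro u₁ _
  apply Finset.sum_congr rfl
  intro u₂ _
  rw [show (2*(u₁:ℤ) - 2*(u₂:ℤ)) = (2*(u₁:ℤ) - (s:ℤ)) + ((s:ℤ) - 2*(u₂:ℤ)) from by ring,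
    zpow_add₀ hz]
  ring

lemma hR (hq1 : ‖q‖ < 1) (z : ℂ) (n : ℕ) :
    ∑ j ∈ range (2*n+1), qBinom q (2*n) j * z ^ (2*(j:ℤ) - 2*(n:ℤ))
      = qHermite q z (2*n) := by
  rw [qHermite, ← Finset.sum_range_reflect (fun j => qBinom q (2*n) j
    * z ^ (2*(j:ℤ) - 2*(n:ℤ))) (2*n+1)]
  apply Finset.sum_congr rfl
  intro j hj
  have hj' : j ≤ 2*n := by have := Finset.mem_range.mp hj; omega
  rw [show 2*n+1-1-j = 2*n-j from by omega, C_symm hq1 hj']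
  congr 1
  have : ((2*n - j : ℕ):ℤ) = 2*(n:ℤ) - (j:ℤ) := by omega
  rw [this]
  push_cast
  ring

end assemble

/-- Equation (5.5): the evaluation of the sum `B_n(z;q)` from Section 5, stated
both in explicit form and in terms of continuous q-Hermite polynomials. -/
theorem B_evaluation (q z : ℂ)
    (hq0 : 0 < ‖q‖) (hq1 : ‖q‖ < 1) (hz : z ≠ 0) (n : ℕ) :
    (∑ s ∈ Finset.range (n + 1),
      (-1 : ℂ) ^ (n - s) * q ^ ((n - s) * (n - s - 1) / 2) /
        (qPoch q q s ^ 2 * qPoch q q (n - s)) *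
        ∑ u₁ ∈ Finset.range (s + 1), ∑ u₂ ∈ Finset.range (s + 1),
          qBinom q s u₁ * qBinom q s u₂ * z ^ (2 * (u₁ : ℤ) - 2 * (u₂ : ℤ))) =
      1 / qPoch q q n ^ 2 *
        ∑ j ∈ Finset.range (2 * n + 1),
          qBinom q (2 * n) j * z ^ (2 * (j : ℤ) - 2 * (n : ℤ)) ∧
    (∑ s ∈ Finset.range (n + 1),
      (-1 : ℂ) ^ (n - s) * q ^ ((n - s) * (n - s - 1) / 2) * qHermite q z s ^ 2 /
        (qPoch q q s ^ 2 * qPoch q q (n - s))) =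
      qHermite q z (2 * n) / qPoch q q n ^ 2 := by
  have main : (∑ s ∈ Finset.range (n + 1),
      (-1 : ℂ) ^ (n - s) * q ^ ((n - s) * (n - s - 1) / 2) * qHermite q z s ^ 2 /
        (qPoch q q s ^ 2 * qPoch q q (n - s))) =
      qHermite q z (2 * n) / qPoch q q n ^ 2 := by
    have step1 : ∀ s ∈ range (n+1),
        (-1 : ℂ) ^ (n - s) * q ^ ((n - s) * (n - s - 1) / 2) * qHermite q z s ^ 2 /
          (qPoch q q s ^ 2 * qPoch q q (n - s))
        = ∑ j ∈ range (s+1), ((-1:ℂ)^(n-s) * q^((n-s)*(n-s-1)/2)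
            * (qBinom q s j^2 * qPoch q q (s-j) * qHermite q z (2*j)))
            / (qPoch q q s ^2 * qPoch q q (n-s)) := by
      intro s _
      rw [hlin2 hq1 hz s, Finset.mul_sum, Finset.sum_div]
    have step2 : ∀ j ∈ range (n+1),
        (∑ t ∈ range (n+1-j), ((-1:ℂ)^(n-(j+t)) * q^((n-(j+t))*(n-(j+t)-1)/2)
          * (qBinom q (j+t) j^2 * qPoch q q ((j+t)-j) * qHermite q z (2*j)))
          / (qPoch q q (j+t) ^2 * qPoch q q (n-(j+t))))
        = qHermite q z (2*j) / qPoch q q j ^ 2 * (if j = n then 1 else 0) := by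
      intro j hj
      have hj' : j ≤ n := by have := Finset.mem_range.mp hj; omega
      have hterm : ∀ t ∈ range (n+1-j),
          ((-1:ℂ)^(n-(j+t)) * q^((n-(j+t))*(n-(j+t)-1)/2)
            * (qBinom q (j+t) j^2 * qPoch q q ((j+t)-j) * qHermite q z (2*j)))
            / (qPoch q q (j+t) ^2 * qPoch q q (n-(j+t)))
          = qHermite q z (2*j) / qPoch q q j ^ 2 *
            ((-1:ℂ)^(n-j-t) * q^((n-j-t)*((n-j-t)-1)/2)
              / (qPoch q q t * qPoch q q (n-j-t))) := by
        intro t _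
        rw [show (j+t)-j = t from by omega, show n-(j+t) = n-j-t from by omega]
        rw [qBinom, if_pos (show j ≤ j+t by omega), show (j+t)-j = t from by omega]
        have h1 := qPoch_ne hq1 t
        have h2 := qPoch_ne hq1 j
        have h3 := qPoch_ne hq1 (j+t)
        have h4 := qPoch_ne hq1 (n-j-t)
        field_simp
      rw [Finset.sum_congr rfl hterm, ← Finset.mul_sum, hinner hq1 hj']
    calc ∑ s ∈ Finset.range (n + 1),
        (-1 : ℂ) ^ (n - s) * q ^ ((n - s) * (n - s - 1) / 2) * qHermite q z s ^ 2 /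
          (qPoch q q s ^ 2 * qPoch q q (n - s))
        = ∑ s ∈ range (n+1), ∑ j ∈ range (s+1), ((-1:ℂ)^(n-s) * q^((n-s)*(n-s-1)/2)
            * (qBinom q s j^2 * qPoch q q (s-j) * qHermite q z (2*j)))
            / (qPoch q q s ^2 * qPoch q q (n-s)) := Finset.sum_congr rfl step1
      _ = ∑ j ∈ range (n+1), ∑ t ∈ range (n+1-j),
            ((-1:ℂ)^(n-(j+t)) * q^((n-(j+t))*(n-(j+t)-1)/2)
            * (qBinom q (j+t) j^2 * qPoch q q ((j+t)-j) * qHermite q z (2*j)))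
            / (qPoch q q (j+t) ^2 * qPoch q q (n-(j+t))) := tri_swap _ n
      _ = ∑ j ∈ range (n+1), qHermite q z (2*j) / qPoch q q j ^ 2
            * (if j = n then 1 else 0) := Finset.sum_congr rfl step2
      _ = ∑ j ∈ range (n+1), (if j = n then qHermite q z (2*j) / qPoch q q j ^ 2 else 0) := by
            apply Finset.sum_congr rfl
            intro j _
            split <;> simp
      _ = qHermite q z (2*n) / qPoch q q n ^ 2 := by
            rw [Finset.sum_ite_eq' (range (n+1)) n
              (fun j => qHermite q z (2*j) / qPoch q q j ^ 2),
              if_pos (Finset.mem_range.mpr (by omega))]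
  constructor
  · have e1 : ∀ s ∈ range (n+1), (-1 : ℂ) ^ (n - s) * q ^ ((n - s) * (n - s - 1) / 2) /
        (qPoch q q s ^ 2 * qPoch q q (n - s)) *
        ∑ u₁ ∈ Finset.range (s + 1), ∑ u₂ ∈ Finset.range (s + 1),
          qBinom q s u₁ * qBinom q s u₂ * z ^ (2 * (u₁ : ℤ) - 2 * (u₂ : ℤ))
        = (-1 : ℂ) ^ (n - s) * q ^ ((n - s) * (n - s - 1) / 2) * qHermite q z s ^ 2 /
        (qPoch q q s ^ 2 * qPoch q q (n - s)) := by
      intro s _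
      rw [hHsq hq1 hz s]
      ring
    rw [Finset.sum_congr rfl e1, main, hR hq1 z n]
    ring
  · exact main
end
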